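/- Let c ∈ ℚ \ {0, 4} and let α = (c + √(c(c−4)))/(2c) in an algebraic closure of ℚ. Then α and 1 − α are the two critical points of the map ψ_c(x) = (2x − 1)/(cx² − 1), and they form a 2-cycle under ψ_c: ψ_c(α) = 1 − α and ψ_c(1 − α) = α, with α ≠ 1 − α. -/

import Mathlib

open Polynomial

/-- The numerator of the derivative of the rational map `N/D`. -/
noncomputable def critNum {K : Type*} [Field K] (N D : K[X]) : K[X] :=
  derivative N * D - N * derivative D

/-- Let `c ∈ ℚ \ {0,4}`, let `s` be a square root of `c(c−4)` in `ℚ̄` and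
`α = (c + s)/(2c)`. Then `α` and `1 − α` are exactly the critical points of
`ψ_c(x) = (2x − 1)/(cx² − 1)`, they are distinct, and they form a 2-cycle:
`ψ_c(α) = 1 − α` and `ψ_c(1 − α) = α`. -/
theorem stmt_4 (c : ℚ) (hc0 : c ≠ 0) (hc4 : c ≠ 4)
    (s : AlgebraicClosure ℚ) (hs : s^2 = (c : AlgebraicClosure ℚ) * ((c : AlgebraicClosure ℚ) - 4))
    (α : AlgebraicClosure ℚ) (hα : α = ((c : AlgebraicClosure ℚ) + s)/(2*c)) :
    (∀ x : AlgebraicClosure ℚ,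
      (critNum (2*X - 1) (C (c : AlgebraicClosure ℚ) * X^2 - 1)).eval x = 0 ↔
        x = α ∨ x = 1 - α) ∧
    α ≠ 1 - α ∧
    (c : AlgebraicClosure ℚ) * α^2 - 1 ≠ 0 ∧
    (2*α - 1)/((c : AlgebraicClosure ℚ) * α^2 - 1) = 1 - α ∧
    (c : AlgebraicClosure ℚ) * (1-α)^2 - 1 ≠ 0 ∧
    (2*(1-α) - 1)/((c : AlgebraicClosure ℚ) * (1-α)^2 - 1) = α := by
  have hc0' : (c : AlgebraicClosure ℚ) ≠ 0 := by exact_mod_cast hc0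
  have hc4' : (c : AlgebraicClosure ℚ) ≠ 4 := by
    intro h; apply hc4; exact_mod_cast h
  have hs0 : s ≠ 0 := by
    intro h
    rw [h] at hs
    have h0 : (c : AlgebraicClosure ℚ) * ((c : AlgebraicClosure ℚ) - 4) = 0 := by
      linear_combination -hs
    rcases mul_eq_zero.mp h0 with h1 | h1
    · exact hc0' h1
    · exact hc4' (by linear_combination h1)
  have hroot : (c : AlgebraicClosure ℚ) * α ^ 2 - (c : AlgebraicClosure ℚ) * α + 1 = 0 := by
    subst hα
    field_simp
    ring_nf
    linear_combination hs
  have h2 : 2 * α - 1 = s / (c : AlgebraicClosure ℚ) := by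
    rw [hα]
    field_simp
    ring
  have hhalf : α ≠ 1 / 2 := by
    intro h
    apply hs0
    have h0 : (2 : AlgebraicClosure ℚ) * α - 1 = 0 := by rw [h]; ring
    rw [h2] at h0
    exact (div_eq_zero_iff.mp h0).resolve_right hc0'
  have hne : α ≠ 1 - α := by
    intro h
    exact hhalf (by linear_combination h / 2)
  have hden1 : (c : AlgebraicClosure ℚ) * α ^ 2 - 1 ≠ 0 := by
    intro h
    have hca : (c : AlgebraicClosure ℚ) * α - 2 = 0 := by linear_combination h - hroot
    apply hhalf
    have h2a : (2 : AlgebraicClosure ℚ) * α - 1 = 0 := by linear_combination h - α * hca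
    linear_combination h2a / 2
  have hψ1 : (2 * α - 1) / ((c : AlgebraicClosure ℚ) * α ^ 2 - 1) = 1 - α := by
    rw [div_eq_iff hden1]
    linear_combination α * hroot
  have hroot2 : (c : AlgebraicClosure ℚ) * (1 - α) ^ 2 - (c : AlgebraicClosure ℚ) * (1 - α) + 1 = 0 := by
    linear_combination hroot
  have hhalf2 : (1 : AlgebraicClosure ℚ) - α ≠ 1 / 2 := by
    intro h; exact hhalf (by linear_combination -h)
  have hden2 : (c : AlgebraicClosure ℚ) * (1 - α) ^ 2 - 1 ≠ 0 := by
    intro h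
    have hca : (c : AlgebraicClosure ℚ) * (1 - α) - 2 = 0 := by linear_combination h - hroot2
    apply hhalf2
    have h2a : (2 : AlgebraicClosure ℚ) * (1 - α) - 1 = 0 := by
      linear_combination h - (1 - α) * hca
    linear_combination h2a / 2
  have hψ2 : (2 * (1 - α) - 1) / ((c : AlgebraicClosure ℚ) * (1 - α) ^ 2 - 1) = α := by
    rw [div_eq_iff hden2]
    linear_combination (1 - α) * hroot2
  refine ⟨?_, hne, hden1, hψ1, hden2, hψ2⟩
  intro x
  have heval : (critNum (2 * X - 1) (C (c : AlgebraicClosure ℚ) * X ^ 2 - 1)).eval x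
      = -2 * (c : AlgebraicClosure ℚ) * ((x - α) * (x - (1 - α))) := by
    simp only [critNum, derivative_sub, derivative_mul, derivative_X, derivative_one,
      derivative_ofNat, derivative_C, derivative_X_pow, eval_sub, eval_mul, eval_add,
      eval_X, eval_one, eval_C, eval_pow, eval_ofNat, eval_natCast, eval_zero]
    ring_nf
    linear_combination (-2 : AlgebraicClosure ℚ) * hroot
  rw [heval]
  constructor
  · intro h
    have h' := (mul_eq_zero.mp h).resolve_left (by
      intro h'
      exact hc0' (by linear_combination -h' / 2))
    rcases mul_eq_zero.mp h' with h1 | h1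
    · exact Or.inl (by linear_combination h1)
    · exact Or.inr (by linear_combination h1)
  · rintro (rfl | rfl) <;> ring
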